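/- The transpose map τ : ℂ^{2×2} → ℂ^{2×2}, τ(X) = Xᵀ, is positive and trace-preserving, yet it violates the 2-positive bound: tr(τ) = 2 > 0 = 2·min Re σ(τ) + (2² − 2). Hence positivity alone does not imply the inequality tr(Φ) ≤ d·min Re σ(Φ) + (d² − d). -/

import Mathlib

open Matrix
open scoped ComplexOrder

/-- A linear map on `d × d` complex matrices is *positive* if it sends positive semidefinite
matrices to positive semidefinite matrices. -/
def IsPosMap {d : ℕ} (Φ : Matrix (Fin d) (Fin d) ℂ → Matrix (Fin d) (Fin d) ℂ) : Prop :=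
  ∀ A : Matrix (Fin d) (Fin d) ℂ, A.PosSemidef → (Φ A).PosSemidef

/-- A map on `d × d` complex matrices is *2-positive* if it sends every positive semidefinite
`2d × 2d` block matrix `[[A, B], [C, D]]` to a positive semidefinite block matrix
`[[Φ A, Φ B], [Φ C, Φ D]]`. -/
def IsTwoPos {d : ℕ} (Φ : Matrix (Fin d) (Fin d) ℂ → Matrix (Fin d) (Fin d) ℂ) : Prop :=
  ∀ A B C D : Matrix (Fin d) (Fin d) ℂ,
    (Matrix.fromBlocks A B C D).PosSemidef →
    (Matrix.fromBlocks (Φ A) (Φ B) (Φ C) (Φ D)).PosSemidef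

/-- A map on matrices is *trace-preserving* if `tr (Φ X) = tr X` for all `X`. -/
def IsTracePreserving {d : ℕ} (Φ : Matrix (Fin d) (Fin d) ℂ → Matrix (Fin d) (Fin d) ℂ) : Prop :=
  ∀ X : Matrix (Fin d) (Fin d) ℂ, (Φ X).trace = X.trace


lemma stdBasis_transpose' (i j : Fin 2) :
    ((Matrix.stdBasis ℂ (Fin 2) (Fin 2)) (i, j))ᵀ = (Matrix.stdBasis ℂ (Fin 2) (Fin 2)) (j, i) := by
  rw [Matrix.stdBasis_eq_single, Matrix.stdBasis_eq_single]
  ext a b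
  simp [Matrix.single, and_comm]

/-- The transpose map on ℂ^{2×2} is positive and trace-preserving but violates the 2-positive
bound: tr(τ) = 2 > 0 = 2·min Re σ(τ) + (2² − 2). -/
theorem transpose_map_violates_bound (τ : Module.End ℂ (Matrix (Fin 2) (Fin 2) ℂ))
    (hτ : ∀ X : Matrix (Fin 2) (Fin 2) ℂ, τ X = Xᵀ) :
    IsPosMap ⇑τ ∧ IsTracePreserving ⇑τ ∧
    LinearMap.trace ℂ (Matrix (Fin 2) (Fin 2) ℂ) τ = 2 ∧
    2 * sInf (Complex.re '' spectrum ℂ τ) + ((2 : ℝ) ^ 2 - 2) = 0 ∧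
    (LinearMap.trace ℂ (Matrix (Fin 2) (Fin 2) ℂ) τ).re >
      2 * sInf (Complex.re '' spectrum ℂ τ) + ((2 : ℝ) ^ 2 - 2) := by
  have htr : LinearMap.trace ℂ (Matrix (Fin 2) (Fin 2) ℂ) τ = 2 := by
    rw [LinearMap.trace_eq_matrix_trace ℂ (Matrix.stdBasis ℂ (Fin 2) (Fin 2)) τ]
    rw [Matrix.trace]
    rw [Fintype.sum_prod_type]
    simp only [Fin.sum_univ_succ, Fin.sum_univ_zero, Matrix.diag, LinearMap.toMatrix_apply, hτ,
      show ((0:Fin 2 × Fin 2)) = ((0,0) : Fin 2 × Fin 2) from rfl,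
      show ((1:Fin 2 × Fin 2)) = ((1,1) : Fin 2 × Fin 2) from rfl,
      stdBasis_transpose', Module.Basis.repr_self, Finsupp.single_apply]
    norm_num
  have hinf : sInf (Complex.re '' spectrum ℂ τ) = -1 := by
    apply IsLeast.csInf_eq
    constructor
    · refine ⟨-1, ?_, rfl⟩
      rw [← Module.End.hasEigenvalue_iff_mem_spectrum]
      apply Module.End.hasEigenvalue_of_hasEigenvector
        (x := single 0 1 1 - single 1 0 1)
      constructor
      · rw [Module.End.mem_eigenspace_iff, hτ]
        ext a b
        fin_cases a <;> fin_cases b <;> simp [single]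
      · intro h
        have := congrFun (congrFun h 0) 1
        simp [single] at this
    · rintro x ⟨μ, hμ, rfl⟩
      rw [← Module.End.hasEigenvalue_iff_mem_spectrum] at hμ
      obtain ⟨v, hv⟩ := hμ.exists_hasEigenvector
      have h1 : τ (τ v) = v := by rw [hτ, hτ, transpose_transpose]
      have h2 : τ (τ v) = (μ * μ) • v := by
        rw [hv.apply_eq_smul, τ.map_smul, hv.apply_eq_smul, smul_smul]
      have hμ2 : μ * μ = 1 := by
        by_contra hne
        have : (μ * μ - 1) • v = 0 := by
          rw [sub_smul, one_smul, sub_eq_zero, ← h2, h1]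
        rcases smul_eq_zero.mp this with h | h
        · exact hne (by linear_combination h)
        · exact hv.right h
      have : μ = 1 ∨ μ = -1 := by
        have := mul_self_eq_one_iff.mp hμ2
        tauto
      rcases this with h | h <;> simp [h]
  refine ⟨?_, ?_, htr, by rw [hinf]; ring, ?_⟩
  · intro A hA
    rw [hτ]
    exact hA.transpose
  · intro X
    rw [hτ]
    exact Matrix.trace_transpose X
  · rw [htr, hinf]
    norm_num
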